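/- Let $\mathcal{J}_1, \ldots, \mathcal{J}_k$ be subspaces $U_1, \ldots, U_k$ and let $E$ be a subspace of a finite-dimensional vector space $V$. Suppose nonnegative integers $\theta_1, \ldots, \theta_k$ satisfy: for every nonempty subset $S \subseteq \{1,\ldots,k\}$, $\sum_{i \in S} \theta_i \le \dim(\sum_{i \in S} U_i + E) - \dim E$. Then there exist subspaces $U'_i \sqsubseteq U_i$ with $\dim U'_i = \theta_i$ such that $\dim(E + U'_1 + \cdots + U'_k) = \dim E + \theta_1 + \cdots + \theta_k$ (i.e., the $U'_i$ and $E$ are in direct sum). -/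

import Mathlib

open Module Submodule

lemma my_finrank_sup_span {F V : Type*} [Field F] [AddCommGroup V] [Module F V]
    [FiniteDimensional F V] {W : Submodule F V} {u : V} (hu : u ∉ W) :
    finrank F ↥(W ⊔ span F {u}) = finrank F W + 1 := by
  have hu0 : u ≠ 0 := fun h => hu (h ▸ W.zero_mem)
  have hd : Disjoint W (span F {u}) := (Submodule.disjoint_span_singleton' hu0).mpr hu
  have h1 := Submodule.finrank_sup_add_finrank_inf_eq W (span F {u})
  rw [hd.eq_bot, finrank_bot, finrank_span_singleton hu0] at h1
  omega

lemma my_finrank_sup_le {F V : Type*} [Field F] [AddCommGroup V] [Module F V]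
    [FiniteDimensional F V] (a b : Submodule F V) :
    finrank F ↥(a ⊔ b) ≤ finrank F a + finrank F b := by
  have h1 := Submodule.finrank_sup_add_finrank_inf_eq a b
  omega

lemma my_finrank_finset_sup_le {F V ι : Type*} [Field F] [AddCommGroup V] [Module F V]
    [FiniteDimensional F V] [DecidableEq ι] (s : Finset ι) (f : ι → Submodule F V) :
    finrank F ↥(s.sup f) ≤ ∑ j ∈ s, finrank F (f j) := by
  induction s using Finset.induction with
  | empty => simp
  | insert a s h ih =>
    rw [Finset.sup_insert, Finset.sum_insert h]
    exact le_trans (my_finrank_sup_le _ _) (by omega)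

lemma my_aux {F V : Type*} [Field F] [AddCommGroup V] [Module F V]
    [FiniteDimensional F V] {k : ℕ} (U : Fin k → Submodule F V) :
    ∀ (n : ℕ) (E : Submodule F V) (θ : Fin k → ℕ), (∑ i, θ i = n) →
    (∀ S : Finset (Fin k), ∑ i ∈ S, θ i + finrank F E ≤ finrank F ↥((⨆ i ∈ S, U i) ⊔ E)) →
    ∃ U' : Fin k → Submodule F V,
      (∀ i, U' i ≤ U i ∧ finrank F (U' i) = θ i) ∧
      finrank F ↥(E ⊔ ⨆ i, U' i) = finrank F E + ∑ i, θ i := by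
  intro n
  induction n with
  | zero =>
    intro E θ hsum _
    have hz : ∀ i ∈ Finset.univ, θ i = 0 := Finset.sum_eq_zero_iff.mp hsum
    refine ⟨fun _ => ⊥, fun i => ⟨bot_le, by simp [hz i (Finset.mem_univ i)]⟩, ?_⟩
    rw [show (⨆ _ : Fin k, (⊥ : Submodule F V)) = ⊥ by simp, sup_bot_eq, hsum, Nat.add_zero]
  | succ n ih =>
    intro E θ hsum hh
    classical
    have hex : ∃ i, θ i ≠ 0 := by
      by_contra hc
      push_neg at hc
      simp [hc] at hsum
    obtain ⟨i, hi⟩ := hex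
    set P : Finset (Fin k) → Prop := fun S =>
      i ∉ S ∧ ∑ j ∈ S, θ j + finrank F E = finrank F ↥((⨆ j ∈ S, U j) ⊔ E) with hP
    set T : Finset (Fin k) := ((Finset.univ : Finset (Finset (Fin k))).filter P).sup id with hTdef
    have hPempty : P ∅ := by
      refine ⟨by simp, ?_⟩
      rw [show ((⨆ j ∈ (∅ : Finset (Fin k)), U j) ⊔ E) = E by simp]
      simp
    have hPsup : ∀ a, P a → ∀ b, P b → P (a ⊔ b) := by
      intro a ha b hb
      rw [hP] at ha hb ⊢
      constructor
      · intro hmem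
        rcases Finset.mem_union.mp hmem with hm | hm
        exacts [ha.1 hm, hb.1 hm]
      · rw [Finset.sup_eq_union]
        have hsupeq : (⨆ j ∈ (a ∪ b : Finset (Fin k)), U j) ⊔ E =
            ((⨆ j ∈ a, U j) ⊔ E) ⊔ ((⨆ j ∈ b, U j) ⊔ E) := by
          rw [← Finset.sup_eq_iSup, ← Finset.sup_eq_iSup, ← Finset.sup_eq_iSup,
            Finset.sup_union]
          rw [sup_assoc, sup_assoc]
          congr 1
          rw [sup_comm E, sup_assoc, sup_idem]
        have hinter : (⨆ j ∈ (a ∩ b : Finset (Fin k)), U j) ⊔ E ≤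
            ((⨆ j ∈ a, U j) ⊔ E) ⊓ ((⨆ j ∈ b, U j) ⊔ E) := by
          apply le_inf
          · exact sup_le_sup_right (biSup_mono fun j hj => (Finset.mem_inter.mp hj).1) E
          · exact sup_le_sup_right (biSup_mono fun j hj => (Finset.mem_inter.mp hj).2) E
        have h1 := Submodule.finrank_sup_add_finrank_inf_eq
          ((⨆ j ∈ a, U j) ⊔ E) ((⨆ j ∈ b, U j) ⊔ E)
        have h2 : ∑ j ∈ a ∩ b, θ j + finrank F E ≤
            finrank F ↥(((⨆ j ∈ a, U j) ⊔ E) ⊓ ((⨆ j ∈ b, U j) ⊔ E)) :=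
          le_trans (hh (a ∩ b)) (Submodule.finrank_mono hinter)
        have h6 := hh (a ∪ b)
        have h7 := Finset.sum_union_inter (s₁ := a) (s₂ := b) (f := θ)
        have h5 : finrank F ↥((⨆ j ∈ (a ∪ b : Finset (Fin k)), U j) ⊔ E) =
            finrank F ↥(((⨆ j ∈ a, U j) ⊔ E) ⊔ ((⨆ j ∈ b, U j) ⊔ E)) := by
          rw [hsupeq]
        have h3 := ha.2
        have h4 := hb.2
        rw [hsupeq]
        omega
    have hPT : P T :=
      Finset.sup_induction hPempty hPsup (fun S hS => (Finset.mem_filter.mp hS).2)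
    set WT : Submodule F V := (⨆ j ∈ T, U j) ⊔ E with hWT
    have hui : ¬ U i ≤ WT := by
      intro hle
      have hWi : (⨆ j ∈ insert i T, U j) ⊔ E = WT := by
        apply le_antisymm
        · apply sup_le _ le_sup_right
          rw [← Finset.sup_eq_iSup, Finset.sup_insert, Finset.sup_eq_iSup]
          exact sup_le hle le_sup_left
        · exact sup_le_sup_right (biSup_mono fun j hj => Finset.mem_insert_of_mem hj) E
      have h1 := hh (insert i T)
      rw [hWi, Finset.sum_insert hPT.1] at h1
      have h2 := hPT.2
      rw [← hWT] at h2
      omega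
    obtain ⟨u, huU, huW⟩ := SetLike.not_le_iff_exists.mp hui
    have hu0 : u ≠ 0 := fun h => huW (h ▸ WT.zero_mem)
    have huE : u ∉ E := fun h => huW (le_sup_right (a := ⨆ j ∈ T, U j) h)
    set E' : Submodule F V := E ⊔ span F {u} with hE'def
    set θ' : Fin k → ℕ := Function.update θ i (θ i - 1) with hθ'def
    have hE' : finrank F E' = finrank F E + 1 := my_finrank_sup_span huE
    have hsum' : ∑ j, θ' j = n := by
      have h1 : ∑ j, θ' j = (θ i - 1) + ∑ j ∈ Finset.univ \ {i}, θ j := by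
        rw [hθ'def]
        exact Finset.sum_update_of_mem (Finset.mem_univ i) θ (θ i - 1)
      have h2 : θ i + ∑ j ∈ Finset.univ.erase i, θ j = ∑ j, θ j :=
        Finset.add_sum_erase _ _ (Finset.mem_univ i)
      rw [Finset.erase_eq] at h2
      omega
    have hh' : ∀ S : Finset (Fin k), ∑ j ∈ S, θ' j + finrank F E' ≤
        finrank F ↥((⨆ j ∈ S, U j) ⊔ E') := by
      intro S
      by_cases hiS : i ∈ S
      · have hspan : span F {u} ≤ ⨆ j ∈ S, U j :=
          (span_singleton_le_iff_mem _ _).mpr (le_iSup₂ (f := fun j (_ : j ∈ S) => U j) i hiS huU)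
        have habs : (⨆ j ∈ S, U j) ⊔ E' = (⨆ j ∈ S, U j) ⊔ E := by
          rw [hE'def, ← sup_assoc, sup_comm (⨆ j ∈ S, U j) E, sup_assoc,
            sup_eq_left.mpr hspan, sup_comm]
        have hsS : ∑ j ∈ S, θ' j = (θ i - 1) + ∑ j ∈ S \ {i}, θ j := by
          rw [hθ'def]
          exact Finset.sum_update_of_mem hiS θ (θ i - 1)
        have h2 : θ i + ∑ j ∈ S.erase i, θ j = ∑ j ∈ S, θ j :=
          Finset.add_sum_erase _ _ hiS
        rw [Finset.erase_eq] at h2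
        have h3 := hh S
        rw [habs, hE']
        omega
      · have hsS : ∑ j ∈ S, θ' j = ∑ j ∈ S, θ j :=
          Finset.sum_congr rfl fun j hj =>
            Function.update_of_ne (ne_of_mem_of_not_mem hj hiS) _ _
        by_cases htight : ∑ j ∈ S, θ j + finrank F E = finrank F ↥((⨆ j ∈ S, U j) ⊔ E)
        · have hST : S ⊆ T := by
            have hmem : S ∈ (Finset.univ : Finset (Finset (Fin k))).filter P :=
              Finset.mem_filter.mpr ⟨Finset.mem_univ _, ⟨hiS, htight⟩⟩
            exact Finset.le_sup (f := id) hmem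
          have hWS : (⨆ j ∈ S, U j) ⊔ E ≤ WT :=
            sup_le_sup_right (biSup_mono fun j hj => hST hj) E
          have huS : u ∉ (⨆ j ∈ S, U j) ⊔ E := fun h => huW (hWS h)
          have heq : (⨆ j ∈ S, U j) ⊔ E' = ((⨆ j ∈ S, U j) ⊔ E) ⊔ span F {u} := by
            rw [hE'def, sup_assoc]
          rw [heq, my_finrank_sup_span huS, hE', hsS, ← htight]
          omega
        · have hlt := lt_of_le_of_ne (hh S) htight
          have hmono : finrank F ↥((⨆ j ∈ S, U j) ⊔ E) ≤ finrank F ↥((⨆ j ∈ S, U j) ⊔ E') :=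
            Submodule.finrank_mono (sup_le_sup_left le_sup_left _)
          rw [hE', hsS]
          omega
    obtain ⟨U'', hU''1, hU''2⟩ := ih E' θ' hsum' hh'
    -- u ∉ U'' i
    have hXle : finrank F ↥(⨆ j, U'' j) ≤ ∑ j, θ' j := by
      have h1 : (⨆ j, U'' j) = (Finset.univ : Finset (Fin k)).sup U'' := by
        rw [Finset.sup_eq_iSup]
        simp
      rw [h1]
      refine le_trans (my_finrank_finset_sup_le _ _) ?_
      exact Finset.sum_le_sum fun j _ => le_of_eq (hU''1 j).2
    have hdisj : E' ⊓ (⨆ j, U'' j) = ⊥ := by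
      have h1 := Submodule.finrank_sup_add_finrank_inf_eq E' (⨆ j, U'' j)
      have h2 : finrank F ↥(E' ⊓ ⨆ j, U'' j) = 0 := by omega
      exact Submodule.finrank_eq_zero.mp h2
    have huU'' : u ∉ U'' i := by
      intro hmem
      have h1 : u ∈ E' ⊓ (⨆ j, U'' j) :=
        ⟨le_sup_right (a := E) (mem_span_singleton_self u), le_iSup U'' i hmem⟩
      rw [hdisj] at h1
      exact hu0 h1
    set U' : Fin k → Submodule F V := Function.update U'' i (U'' i ⊔ span F {u}) with hU'def
    have hU'i : U' i = U'' i ⊔ span F {u} := Function.update_self _ _ _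
    have hU'ne : ∀ j, j ≠ i → U' j = U'' j := fun j hj => Function.update_of_ne hj _ _
    refine ⟨U', fun j => ?_, ?_⟩
    · by_cases hj : j = i
      · subst hj
        rw [hU'i]
        constructor
        · exact sup_le (hU''1 j).1 ((span_singleton_le_iff_mem _ _).mpr huU)
        · rw [my_finrank_sup_span huU'', (hU''1 j).2, hθ'def, Function.update_self]
          omega
      · rw [hU'ne j hj]
        refine ⟨(hU''1 j).1, ?_⟩
        rw [(hU''1 j).2, hθ'def, Function.update_of_ne hj]
    · have hsupU' : (⨆ j, U' j) = span F {u} ⊔ ⨆ j, U'' j := by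
        apply le_antisymm
        · apply iSup_le
          intro j
          by_cases hj : j = i
          · subst hj
            rw [hU'i]
            exact sup_le (le_trans (le_iSup U'' j) le_sup_right) le_sup_left
          · rw [hU'ne j hj]
            exact le_trans (le_iSup U'' j) le_sup_right
        · apply sup_le
          · exact le_trans (le_sup_right (a := U'' i)) (hU'i ▸ le_iSup U' i)
          · exact iSup_mono fun j => by
              by_cases hj : j = i
              · subst hj; rw [hU'i]; exact le_sup_left
              · rw [hU'ne j hj]
      have heq : E ⊔ ⨆ j, U' j = E' ⊔ ⨆ j, U'' j := by
        rw [hsupU', hE'def, ← sup_assoc]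
      rw [heq, hU''2, hE', hsum', hsum]
      omega

theorem extract_orthogonal_subspaces_if
    (F V : Type*) [Field F] [AddCommGroup V] [Module F V]
    [FiniteDimensional F V] (k : ℕ)
    (U : Fin k → Submodule F V) (E : Submodule F V) (θ : Fin k → ℕ)
    (h : ∀ S : Finset (Fin k), S.Nonempty →
      ∑ i ∈ S, θ i ≤ Module.finrank F ↥((⨆ i ∈ S, U i) ⊔ E) - Module.finrank F E) :
    ∃ U' : Fin k → Submodule F V,
      (∀ i, U' i ≤ U i ∧ Module.finrank F (U' i) = θ i) ∧
      Module.finrank F ↥(E ⊔ ⨆ i, U' i) = Module.finrank F E + ∑ i, θ i := by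
  apply my_aux U (∑ i, θ i) E θ rfl
  intro S
  rcases S.eq_empty_or_nonempty with rfl | hS
  · rw [show ((⨆ i ∈ (∅ : Finset (Fin k)), U i) ⊔ E) = E by simp]
    simp
  · have h1 := h S hS
    have h2 : finrank F E ≤ finrank F ↥((⨆ i ∈ S, U i) ⊔ E) :=
      Submodule.finrank_mono le_sup_right
    omega
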